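/- For an E⁻¹-closed semikernel S of the digraph G of a theory Γ in graph normal form, the 3-partition (S, E⁻¹(S), G \ E⁻¹[S]) satisfies every clause of the clausal theory of G, i.e., every positive clause {x} ∪ E(x) and every negative clause {¬x, ¬y} for y ∈ E(x). -/
import Mathlib


/-- A clause over atoms `V`: positive atoms and negated atoms. -/
abbrev Clause (V : Type) := Finset V × Finset V

/-- Resolution derivability from a set of clauses `Γ`:
membership, the axioms `a ∨ ¬a`, and the resolution (cut) rule. -/
inductive Res {V : Type} [DecidableEq V] (Γ : Set (Clause V)) : Clause V → Prop
  | mem {C : Clause V} : C ∈ Γ → Res Γ C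
  | ax (a : V) : Res Γ ({a}, {a})
  | cut {A₁ B₁ A₂ B₂ : Finset V} (a : V) :
      Res Γ (insert a A₁, B₁) → Res Γ (A₂, insert a B₂) → Res Γ (A₁ ∪ A₂, B₁ ∪ B₂)

/-- Satisfaction of a clause by a 3-partition `(t,f,p)` of the atoms. -/
def Sat {V : Type} (t f p : Set V) (C : Clause V) : Prop :=
  (∃ a ∈ C.1, a ∈ t) ∨ (∃ b ∈ C.2, b ∈ f) ∨
    ((∀ a ∈ C.1, a ∈ p) ∧ (∀ b ∈ C.2, b ∈ p) ∧ p.Nonempty)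

theorem stmt18 {V : Type} [DecidableEq V] (Eout : V → Finset V) (S : Set V)
    (hsemi : {y | ∃ x ∈ S, y ∈ Eout x} ⊆ {y | ∃ x ∈ S, x ∈ Eout y} ∧
             {y | ∃ x ∈ S, x ∈ Eout y} ⊆ Sᶜ)
    (hcl : {y | ∃ x ∈ S ∪ {y | ∃ x ∈ S, x ∈ Eout y}, x ∈ Eout y} ⊆
             S ∪ {y | ∃ x ∈ S, x ∈ Eout y}) :
    (∀ x : V, Sat S {y | ∃ x ∈ S, x ∈ Eout y}
        (Set.univ \ (S ∪ {y | ∃ x ∈ S, x ∈ Eout y})) (insert x (Eout x), ∅)) ∧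
    (∀ x y : V, y ∈ Eout x →
      Sat S {y | ∃ x ∈ S, x ∈ Eout y}
        (Set.univ \ (S ∪ {y | ∃ x ∈ S, x ∈ Eout y})) (∅, insert x {y})) := by
  set F : Set V := {y | ∃ x ∈ S, x ∈ Eout y} with hF
  constructor
  · intro x
    by_cases hxS : x ∈ S
    · exact Or.inl ⟨x, Finset.mem_insert_self _ _, hxS⟩
    by_cases hxF : x ∈ F
    · obtain ⟨s, hs, hse⟩ := hxF
      exact Or.inl ⟨s, Finset.mem_insert_of_mem hse, hs⟩
    · refine Or.inr (Or.inr ⟨?_, by simp, ⟨x, Set.mem_diff_of_mem trivial (by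
        intro h; rcases h with h | h; exact hxS h; exact hxF h)⟩⟩)
      intro a ha
      rcases Finset.mem_insert.mp ha with rfl | ha
      · exact Set.mem_diff_of_mem trivial (by
          intro h; rcases h with h | h; exact hxS h; exact hxF h)
      · refine Set.mem_diff_of_mem trivial ?_
        intro h
        rcases h with h | h
        · exact hxF ⟨a, h, ha⟩
        · exact (by intro h'; rcases h' with h' | h'; exact hxS h'; exact hxF h' :
            x ∉ S ∪ F) (hcl ⟨a, Or.inr h, ha⟩)
  · intro x y hxy
    by_cases hxS : x ∈ S
    · exact Or.inr (Or.inl ⟨y, by simp, hsemi.1 ⟨x, hxS, hxy⟩⟩)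
    by_cases hxF : x ∈ F
    · exact Or.inr (Or.inl ⟨x, by simp, hxF⟩)
    have hxp : x ∈ Set.univ \ (S ∪ F) := Set.mem_diff_of_mem trivial (by
      intro h; rcases h with h | h; exact hxS h; exact hxF h)
    have hyp : y ∈ Set.univ \ (S ∪ F) := by
      refine Set.mem_diff_of_mem trivial ?_
      intro h
      rcases h with h | h
      · exact hxF ⟨y, h, hxy⟩
      · exact (by intro h'; rcases h' with h' | h'; exact hxS h'; exact hxF h' :
          x ∉ S ∪ F) (hcl ⟨y, Or.inr h, hxy⟩)
    refine Or.inr (Or.inr ⟨by simp, ?_, ⟨x, hxp⟩⟩)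
    intro b hb
    rcases Finset.mem_insert.mp hb with rfl | hb
    · exact hxp
    · simp only [Finset.mem_singleton] at hb
      subst hb; exact hyp
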